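/- Let w₀ : [0,∞) → (0,∞) be decreasing and essentially constant over dyadic intervals with constant β. Then there exist N and C depending only on β such that the radial weight w(x) = w₀(|x|) is in A₁(ℝⁿ) with [w]_{A₁(ℝⁿ)} ≤ C for all n ≥ N; concretely, for all balls B(x,R): if |x| ≤ 2R then avg_{B(x,R)} w ≤ 2β³ ess inf_{B(x,R)} w, and if |x| ≥ 2R then avg_{B(x,R)} w ≤ β² ess inf_{B(x,R)} w. -/

import Mathlib

open MeasureTheory Metric
open scoped ENNReal

lemma geom_aux {q : ℝ≥0∞} (hq : q ≤ 2⁻¹) : ∑' j : ℕ, q ^ (j + 1) ≤ 1 := by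
  calc ∑' j : ℕ, q ^ (j + 1) ≤ ∑' j : ℕ, (2⁻¹ : ℝ≥0∞) ^ (j + 1) :=
        ENNReal.tsum_le_tsum fun j => pow_le_pow_left' hq _
    _ = 2⁻¹ * ∑' j : ℕ, (2⁻¹ : ℝ≥0∞) ^ j := by
        simp_rw [pow_succ, mul_comm]; rw [ENNReal.tsum_mul_left]
    _ = 2⁻¹ * (1 - 2⁻¹)⁻¹ := by rw [ENNReal.tsum_geometric]
    _ = 1 := by
        rw [ENNReal.one_sub_inv_two, inv_inv]
        exact ENNReal.inv_mul_cancel (by norm_num) (by norm_num)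

lemma halve_aux (w₀ : ℝ → ℝ) (β : ℝ)
    (hdyad : ∀ R : ℝ, 0 < R → ∀ s ∈ Set.Icc R (2 * R), ∀ t ∈ Set.Icc R (2 * R),
      w₀ s ≤ β * w₀ t) {S : ℝ} (hS : 0 < S) : w₀ (S / 2) ≤ β * w₀ S :=
  hdyad (S / 2) (by linarith) (S / 2) ⟨le_refl _, by linarith⟩ S ⟨by linarith, by linarith⟩

lemma iter_aux (w₀ : ℝ → ℝ) (β : ℝ) (hβ : 1 ≤ β)
    (hdyad : ∀ R : ℝ, 0 < R → ∀ s ∈ Set.Icc R (2 * R), ∀ t ∈ Set.Icc R (2 * R),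
      w₀ s ≤ β * w₀ t) {R : ℝ} (hR : 0 < R) (k : ℕ) :
    w₀ (R / 2 ^ k) ≤ β ^ k * w₀ R := by
  induction k with
  | zero => simp
  | succ k ih =>
      have h1 : R / 2 ^ (k + 1) = (R / 2 ^ k) / 2 := by ring
      have h2 : (0:ℝ) < R / 2 ^ k := by positivity
      calc w₀ (R / 2 ^ (k + 1)) = w₀ ((R / 2 ^ k) / 2) := by rw [h1]
        _ ≤ β * w₀ (R / 2 ^ k) := halve_aux w₀ β hdyad h2
        _ ≤ β * (β ^ k * w₀ R) := mul_le_mul_of_nonneg_left ih (by linarith)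
        _ = β ^ (k + 1) * w₀ R := by ring

set_option maxHeartbeats 1000000 in
theorem stmt_16 (w₀ : ℝ → ℝ) (hw : ∀ r : ℝ, 0 ≤ r → 0 < w₀ r)
    (hdec : ∀ s t : ℝ, 0 ≤ s → s ≤ t → w₀ t ≤ w₀ s)
    (β : ℝ) (hβ : 1 ≤ β)
    (hdyad : ∀ R : ℝ, 0 < R → ∀ s ∈ Set.Icc R (2 * R), ∀ t ∈ Set.Icc R (2 * R),
      w₀ s ≤ β * w₀ t) :
    ∃ N : ℕ, ∃ C : ℝ, 0 < C ∧
      ∀ n : ℕ, N ≤ n → ∀ (x : EuclideanSpace ℝ (Fin n)) (R : ℝ), 0 < R →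
        ((volume (ball x R))⁻¹ * ∫⁻ y in ball x R, ENNReal.ofReal (w₀ ‖y‖)
            ≤ ENNReal.ofReal C *
              essInf (fun y => ENNReal.ofReal (w₀ ‖y‖)) (volume.restrict (ball x R))) ∧
        (‖x‖ ≤ 2 * R →
          (volume (ball x R))⁻¹ * ∫⁻ y in ball x R, ENNReal.ofReal (w₀ ‖y‖)
            ≤ ENNReal.ofReal (2 * β ^ 3) *
              essInf (fun y => ENNReal.ofReal (w₀ ‖y‖)) (volume.restrict (ball x R))) ∧
        (2 * R ≤ ‖x‖ →
          (volume (ball x R))⁻¹ * ∫⁻ y in ball x R, ENNReal.ofReal (w₀ ‖y‖)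
            ≤ ENNReal.ofReal (β ^ 2) *
              essInf (fun y => ENNReal.ofReal (w₀ ‖y‖)) (volume.restrict (ball x R))) := by
  classical
  have hβ0 : (0:ℝ) < β := by linarith
  obtain ⟨N₀, hN₀⟩ := pow_unbounded_of_one_lt (R := ℝ) (2 * β) one_lt_two
  refine ⟨max N₀ 1, 2 * β ^ 3, by positivity, ?_⟩
  intro n hn x R hR
  have hn1 : 1 ≤ n := le_trans (le_max_right _ _) hn
  have h2n : 2 * β ≤ 2 ^ n :=
    le_trans hN₀.le (pow_le_pow_right₀ one_le_two (le_trans (le_max_left _ _) hn))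
  have hfr : 0 < Module.finrank ℝ (EuclideanSpace ℝ (Fin n)) := by
    rw [finrank_euclideanSpace_fin]; omega
  haveI : Nontrivial (EuclideanSpace ℝ (Fin n)) := Module.nontrivial_of_finrank_pos hfr
  set W : EuclideanSpace ℝ (Fin n) → ℝ≥0∞ := fun y => ENNReal.ofReal (w₀ ‖y‖) with hW
  set V : ℝ≥0∞ := volume (ball x R) with hVdef
  have hV0 : V ≠ 0 := (measure_ball_pos volume x hR).ne'
  have hVtop : V ≠ ⊤ := measure_ball_lt_top.ne
  set I : ℝ≥0∞ := essInf W (volume.restrict (ball x R)) with hIdef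
  have essinf_ge : ∀ c : ℝ, (∀ y ∈ ball x R, c ≤ w₀ ‖y‖) → ENNReal.ofReal c ≤ I := by
    intro c hc
    refine le_essInf_of_ae_le _ ?_
    filter_upwards [ae_restrict_mem measurableSet_ball] with y hy
    exact ENNReal.ofReal_le_ofReal (hc y hy)
  -- far case
  have far : 2 * R ≤ ‖x‖ →
      V⁻¹ * (∫⁻ y in ball x R, W y) ≤ ENNReal.ofReal (β ^ 2) * I := by
    intro hx
    have hxpos : 0 < ‖x‖ := lt_of_lt_of_le (by linarith) hx
    have hinf : ENNReal.ofReal (w₀ (‖x‖ + R)) ≤ I := by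
      refine essinf_ge _ fun y hy => hdec ‖y‖ (‖x‖ + R) (norm_nonneg y) ?_
      have h1 : ‖y - x‖ < R := mem_ball_iff_norm.mp hy
      have h2 : ‖y‖ ≤ ‖y - x‖ + ‖x‖ := by
        calc ‖y‖ = ‖(y - x) + x‖ := by rw [sub_add_cancel]
          _ ≤ ‖y - x‖ + ‖x‖ := norm_add_le _ _
      linarith
    have hup : ∀ y ∈ ball x R, w₀ ‖y‖ ≤ β ^ 2 * w₀ (‖x‖ + R) := by
      intro y hy
      have h1 : ‖x‖ - ‖y‖ ≤ ‖x - y‖ := norm_sub_norm_le _ _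
      have h2 : ‖x - y‖ < R := by rw [← dist_eq_norm]; exact (mem_ball'.mp hy)
      have h3 : ‖x‖ / 2 ≤ ‖y‖ := by linarith
      have h4 : w₀ ‖y‖ ≤ w₀ (‖x‖ / 2) := hdec (‖x‖ / 2) ‖y‖ (by positivity) h3
      have h5 : w₀ (‖x‖ / 2) ≤ β * w₀ ‖x‖ :=
        hdyad (‖x‖ / 2) (by linarith) (‖x‖ / 2) ⟨le_refl _, by linarith⟩ ‖x‖
          ⟨by linarith, by linarith⟩
      have h6 : w₀ ‖x‖ ≤ β * w₀ (‖x‖ + R) :=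
        hdyad ‖x‖ hxpos ‖x‖ ⟨le_refl _, by linarith⟩ (‖x‖ + R) ⟨by linarith, by linarith⟩
      nlinarith [hw ‖x‖ (norm_nonneg x), hw (‖x‖ + R) (by positivity)]
    have hint : (∫⁻ y in ball x R, W y) ≤ ENNReal.ofReal (β ^ 2 * w₀ (‖x‖ + R)) * V := by
      calc (∫⁻ y in ball x R, W y)
          ≤ ∫⁻ _ in ball x R, ENNReal.ofReal (β ^ 2 * w₀ (‖x‖ + R)) :=
            lintegral_mono_ae ((ae_restrict_mem measurableSet_ball).mono fun y hy =>
              ENNReal.ofReal_le_ofReal (hup y hy))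
        _ = ENNReal.ofReal (β ^ 2 * w₀ (‖x‖ + R)) * V := setLIntegral_const _ _
    calc V⁻¹ * (∫⁻ y in ball x R, W y)
        ≤ V⁻¹ * (ENNReal.ofReal (β ^ 2 * w₀ (‖x‖ + R)) * V) := mul_le_mul_right hint _
      _ = ENNReal.ofReal (β ^ 2 * w₀ (‖x‖ + R)) * (V⁻¹ * V) := by ring
      _ = ENNReal.ofReal (β ^ 2 * w₀ (‖x‖ + R)) := by
          rw [ENNReal.inv_mul_cancel hV0 hVtop, mul_one]
      _ = ENNReal.ofReal (β ^ 2) * ENNReal.ofReal (w₀ (‖x‖ + R)) :=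
          ENNReal.ofReal_mul (by positivity)
      _ ≤ ENNReal.ofReal (β ^ 2) * I := mul_le_mul_right hinf _
  -- near case
  have near : ‖x‖ ≤ 2 * R →
      V⁻¹ * (∫⁻ y in ball x R, W y) ≤ ENNReal.ofReal (2 * β ^ 3) * I := by
    intro hx
    have hinf : ENNReal.ofReal (w₀ (3 * R)) ≤ I := by
      refine essinf_ge _ fun y hy => hdec ‖y‖ (3 * R) (norm_nonneg y) ?_
      have h1 : ‖y - x‖ < R := mem_ball_iff_norm.mp hy
      have h2 : ‖y‖ ≤ ‖y - x‖ + ‖x‖ := by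
        calc ‖y‖ = ‖(y - x) + x‖ := by rw [sub_add_cancel]
          _ ≤ ‖y - x‖ + ‖x‖ := norm_add_le _ _
      linarith
    set A0 : Set (EuclideanSpace ℝ (Fin n)) := ball x R ∩ {y | R / 2 ≤ ‖y‖} with hA0def
    set A : ℕ → Set (EuclideanSpace ℝ (Fin n)) :=
      fun j => {y | R / 2 ^ (j + 2) ≤ ‖y‖} ∩ ball 0 (R / 2 ^ (j + 1)) with hAdef
    have hcover : ball x R ⊆ (A0 ∪ {0}) ∪ ⋃ j, A j := by
      intro y hy
      rcases le_or_gt (R / 2) ‖y‖ with h | h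
      · exact Or.inl (Or.inl ⟨hy, h⟩)
      rcases eq_or_ne y 0 with rfl | h0
      · exact Or.inl (Or.inr rfl)
      right
      have hy0 : 0 < ‖y‖ := norm_pos_iff.mpr h0
      have hex : ∃ k, R / 2 ^ k ≤ ‖y‖ := by
        obtain ⟨k, hk⟩ := exists_pow_lt_of_lt_one (div_pos hy0 hR)
          (by norm_num : (1:ℝ) / 2 < 1)
        refine ⟨k, ?_⟩
        have h2k : (0:ℝ) < 2 ^ k := by positivity
        rw [div_pow, one_pow, div_lt_div_iff₀ h2k hR] at hk
        rw [div_le_iff₀ h2k]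
        linarith
      set k := Nat.find hex with hkdef
      have hk1 : R / 2 ^ k ≤ ‖y‖ := Nat.find_spec hex
      have hk2 : 2 ≤ k := by
        by_contra h'
        push_neg at h'
        have h2k : (2:ℝ) ^ k ≤ 2 := by
          interval_cases k <;> norm_num
        have : R / 2 ≤ R / 2 ^ k := by
          apply div_le_div_of_nonneg_left hR.le (by positivity) h2k
        linarith
      have hk3 : ‖y‖ < R / 2 ^ (k - 1) := by
        have hmin := Nat.find_min hex (show k - 1 < k by omega)
        push_neg at hmin
        exact hmin
      refine Set.mem_iUnion.mpr ⟨k - 2, ?_, ?_⟩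
      · show R / 2 ^ (k - 2 + 2) ≤ ‖y‖
        rw [show k - 2 + 2 = k from by omega]; exact hk1
      · rw [mem_ball_zero_iff]
        show ‖y‖ < R / 2 ^ (k - 2 + 1)
        rw [show k - 2 + 1 = k - 1 from by omega]; exact hk3
    -- bound on A0
    have hwR : 0 < w₀ R := hw R hR.le
    have hA0 : (∫⁻ y in A0, W y) ≤ ENNReal.ofReal (β * w₀ R) * V := by
      have hA0meas : MeasurableSet A0 :=
        measurableSet_ball.inter ((isClosed_le continuous_const continuous_norm).measurableSet)
      calc (∫⁻ y in A0, W y) ≤ ∫⁻ _ in A0, ENNReal.ofReal (β * w₀ R) := by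
            refine lintegral_mono_ae ((ae_restrict_mem hA0meas).mono fun y hy => ?_)
            refine ENNReal.ofReal_le_ofReal ?_
            have h1 : w₀ ‖y‖ ≤ w₀ (R / 2) := hdec (R / 2) ‖y‖ (by linarith) hy.2
            have h2 : w₀ (R / 2) ≤ β * w₀ R := halve_aux w₀ β hdyad hR
            linarith
        _ = ENNReal.ofReal (β * w₀ R) * volume A0 := setLIntegral_const _ _
        _ ≤ ENNReal.ofReal (β * w₀ R) * V :=
            mul_le_mul_right (measure_mono Set.inter_subset_left) _
    -- singleton
    have hsing : (∫⁻ y in ({0} : Set (EuclideanSpace ℝ (Fin n))), W y) = 0 := by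
      rw [Measure.restrict_eq_zero.mpr (measure_singleton 0), lintegral_zero_measure]
    -- ball volume formula
    set B1 : ℝ≥0∞ := volume (ball (0 : EuclideanSpace ℝ (Fin n)) 1) with hB1def
    have hvol : ∀ (z : EuclideanSpace ℝ (Fin n)) (r : ℝ), 0 ≤ r →
        volume (ball z r) = ENNReal.ofReal (r ^ n) * B1 := by
      intro z r hr
      rw [Measure.addHaar_ball (μ := volume) z hr, finrank_euclideanSpace_fin]
    have hVeq : V = ENNReal.ofReal (R ^ n) * B1 := hvol x R hR.le
    -- bound on annuli
    set q : ℝ≥0∞ := ENNReal.ofReal (β / 2 ^ n) with hqdef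
    have hAj : ∀ j : ℕ, (∫⁻ y in A j, W y)
        ≤ ENNReal.ofReal β * ENNReal.ofReal (w₀ R) * V * q ^ (j + 1) := by
      intro j
      have hmeas : MeasurableSet (A j) :=
        ((isClosed_le continuous_const continuous_norm).measurableSet).inter measurableSet_ball
      have hpt : ∀ y ∈ A j, w₀ ‖y‖ ≤ β ^ (j + 2) * w₀ R := by
        intro y hy
        have h1 : w₀ ‖y‖ ≤ w₀ (R / 2 ^ (j + 2)) :=
          hdec (R / 2 ^ (j + 2)) ‖y‖ (by positivity) hy.1
        have h2 := iter_aux w₀ β hβ hdyad hR (j + 2)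
        linarith
      calc (∫⁻ y in A j, W y) ≤ ∫⁻ _ in A j, ENNReal.ofReal (β ^ (j + 2) * w₀ R) := by
            refine lintegral_mono_ae ((ae_restrict_mem hmeas).mono fun y hy => ?_)
            exact ENNReal.ofReal_le_ofReal (hpt y hy)
        _ = ENNReal.ofReal (β ^ (j + 2) * w₀ R) * volume (A j) := setLIntegral_const _ _
        _ ≤ ENNReal.ofReal (β ^ (j + 2) * w₀ R) *
              (ENNReal.ofReal ((R / 2 ^ (j + 1)) ^ n) * B1) := by
            refine mul_le_mul_right ?_ _
            rw [← hvol 0 (R / 2 ^ (j + 1)) (by positivity)]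
            exact measure_mono Set.inter_subset_right
        _ = ENNReal.ofReal (β ^ (j + 2) * w₀ R * (R / 2 ^ (j + 1)) ^ n) * B1 := by
            rw [ENNReal.ofReal_mul (mul_nonneg (by positivity) hwR.le)]
            ring
        _ = ENNReal.ofReal (β * w₀ R * R ^ n * (β / 2 ^ n) ^ (j + 1)) * B1 := by
            congr 2
            rw [div_pow, div_pow, ← pow_mul, ← pow_mul, Nat.mul_comm n (j + 1)]
            have h2 : ((2:ℝ) ^ ((j + 1) * n)) ≠ 0 := by positivity
            field_simp
            ring
        _ = ENNReal.ofReal β * ENNReal.ofReal (w₀ R) * V * q ^ (j + 1) := by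
            rw [hqdef, hVeq,
              ENNReal.ofReal_mul
                (mul_nonneg (mul_nonneg hβ0.le hwR.le) (by positivity : (0:ℝ) ≤ R ^ n)),
              ENNReal.ofReal_mul (mul_nonneg hβ0.le hwR.le),
              ENNReal.ofReal_mul hβ0.le,
              ENNReal.ofReal_pow (by positivity : (0:ℝ) ≤ β / 2 ^ n)]
            ring
    have hq : q ≤ 2⁻¹ := by
      have h1 : β / 2 ^ n ≤ 1 / 2 := by
        rw [div_le_div_iff₀ (by positivity) (by norm_num)]
        linarith
      calc q ≤ ENNReal.ofReal (1 / 2) := ENNReal.ofReal_le_ofReal h1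
        _ = 2⁻¹ := by
          rw [one_div, ENNReal.ofReal_inv_of_pos two_pos, ENNReal.ofReal_ofNat]
    have hsum : (∑' j : ℕ, ∫⁻ y in A j, W y)
        ≤ ENNReal.ofReal β * ENNReal.ofReal (w₀ R) * V := by
      calc (∑' j : ℕ, ∫⁻ y in A j, W y)
          ≤ ∑' j : ℕ, ENNReal.ofReal β * ENNReal.ofReal (w₀ R) * V * q ^ (j + 1) :=
            ENNReal.tsum_le_tsum hAj
        _ = ENNReal.ofReal β * ENNReal.ofReal (w₀ R) * V * ∑' j : ℕ, q ^ (j + 1) :=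
            ENNReal.tsum_mul_left
        _ ≤ ENNReal.ofReal β * ENNReal.ofReal (w₀ R) * V * 1 :=
            mul_le_mul_right (geom_aux hq) _
        _ = ENNReal.ofReal β * ENNReal.ofReal (w₀ R) * V := mul_one _
    have hmain : (∫⁻ y in ball x R, W y) ≤ ENNReal.ofReal (2 * (β * w₀ R)) * V := by
      calc (∫⁻ y in ball x R, W y) ≤ ∫⁻ y in (A0 ∪ {0}) ∪ ⋃ j, A j, W y :=
            lintegral_mono_set hcover
        _ ≤ (∫⁻ y in A0 ∪ {0}, W y) + ∫⁻ y in ⋃ j, A j, W y := lintegral_union_le _ _ _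
        _ ≤ ((∫⁻ y in A0, W y) + ∫⁻ y in ({0} : Set (EuclideanSpace ℝ (Fin n))), W y)
              + ∑' j : ℕ, ∫⁻ y in A j, W y :=
            add_le_add (lintegral_union_le _ _ _) (lintegral_iUnion_le _ _)
        _ ≤ (ENNReal.ofReal (β * w₀ R) * V + 0)
              + ENNReal.ofReal β * ENNReal.ofReal (w₀ R) * V :=
            add_le_add (add_le_add hA0 hsing.le) hsum
        _ = ENNReal.ofReal (2 * (β * w₀ R)) * V := by
            rw [add_zero, ENNReal.ofReal_mul (by norm_num : (0:ℝ) ≤ 2),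
              ENNReal.ofReal_mul hβ0.le, ENNReal.ofReal_ofNat]
            ring
    have hfin : ENNReal.ofReal (2 * (β * w₀ R)) ≤ ENNReal.ofReal (2 * β ^ 3) * I := by
      have h1 : w₀ R ≤ β * w₀ (2 * R) :=
        hdyad R hR R ⟨le_refl _, by linarith⟩ (2 * R) ⟨by linarith, le_refl _⟩
      have h2 : w₀ (2 * R) ≤ β * w₀ (3 * R) :=
        hdyad (2 * R) (by linarith) (2 * R) ⟨le_refl _, by linarith⟩ (3 * R)
          ⟨by linarith, by linarith⟩
      have h3 : 2 * (β * w₀ R) ≤ 2 * β ^ 3 * w₀ (3 * R) := by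
        have h4 : β * w₀ (2 * R) ≤ β * (β * w₀ (3 * R)) :=
          mul_le_mul_of_nonneg_left h2 hβ0.le
        have h5 : w₀ R ≤ β ^ 2 * w₀ (3 * R) := by nlinarith
        have h6 : β * w₀ R ≤ β * (β ^ 2 * w₀ (3 * R)) :=
          mul_le_mul_of_nonneg_left h5 hβ0.le
        nlinarith
      calc ENNReal.ofReal (2 * (β * w₀ R)) ≤ ENNReal.ofReal (2 * β ^ 3 * w₀ (3 * R)) :=
            ENNReal.ofReal_le_ofReal h3
        _ = ENNReal.ofReal (2 * β ^ 3) * ENNReal.ofReal (w₀ (3 * R)) :=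
            ENNReal.ofReal_mul (by positivity)
        _ ≤ ENNReal.ofReal (2 * β ^ 3) * I := mul_le_mul_right hinf _
    calc V⁻¹ * (∫⁻ y in ball x R, W y)
        ≤ V⁻¹ * (ENNReal.ofReal (2 * (β * w₀ R)) * V) := mul_le_mul_right hmain _
      _ = ENNReal.ofReal (2 * (β * w₀ R)) * (V⁻¹ * V) := by ring
      _ = ENNReal.ofReal (2 * (β * w₀ R)) := by
          rw [ENNReal.inv_mul_cancel hV0 hVtop, mul_one]
      _ ≤ ENNReal.ofReal (2 * β ^ 3) * I := hfin
  refine ⟨?_, near, far⟩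
  rcases le_total ‖x‖ (2 * R) with h | h
  · exact near h
  · refine le_trans (far h) (mul_le_mul_left (ENNReal.ofReal_le_ofReal ?_) _)
    nlinarith
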